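/- Lucas-derivatives of the Lucas-Pantograph sine and cosine: let u ∈ ℂ, u ≠ 0, and assume the series defining sin_{s,t}(w,u) and cos_{s,t}(w,u) converge absolutely for every w ∈ ℂ. Then for every x ≠ 0: D_{s,t}[sin_{s,t}(·,u)](x) = cos_{s,t}(ux, u) and D_{s,t}[cos_{s,t}(·,u)](x) = −sin_{s,t}(ux, u); consequently D_{s,t}²[sin_{s,t}(·,u)](x) = −u·sin_{s,t}(u²x, u) and D_{s,t}²[cos_{s,t}(·,u)](x) = −u·cos_{s,t}(u²x, u). -/

import Mathlib

open scoped BigOperators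

noncomputable section

/-- The Lucas sequence `{n}_{s,t}`. -/
def lucasSeq (s t : ℂ) : ℕ → ℂ
  | 0 => 0
  | 1 => 1
  | n + 2 => s * lucasSeq s t (n + 1) + t * lucasSeq s t n

/-- The Lucastorial `{n}_{s,t}!`. -/
def lucasFact (s t : ℂ) : ℕ → ℂ
  | 0 => 1
  | n + 1 => lucasFact s t n * lucasSeq s t (n + 1)

/-- The Lucasnomial coefficient `{n choose k}_{s,t}`. -/
def lucasBinom (s t : ℂ) (n k : ℕ) : ℂ :=
  lucasFact s t n / (lucasFact s t k * lucasFact s t (n - k))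

/-- The `(u,v)`-deformed Lucasnomial power `(x ⊕_{u,v} y)^{(n)}`. -/
def lucasPow (s t u v x y : ℂ) (n : ℕ) : ℂ :=
  ∑ k ∈ Finset.range (n + 1),
    lucasBinom s t n k * u ^ ((n - k).choose 2) * v ^ (k.choose 2) * x ^ (n - k) * y ^ k

/-- The Lucas-derivative with respect to the roots `p = φ`, `q = φ'`. -/
def lucasDeriv (p q : ℂ) (f : ℂ → ℂ) (x : ℂ) : ℂ :=
  (f (p * x) - f (q * x)) / ((p - q) * x)

/-- The Lucas-derivative, extended by `0` at `0`, as an operator suitable for iteration. -/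
def lucasDeriv0 (p q : ℂ) (f : ℂ → ℂ) : ℂ → ℂ :=
  fun x => if x = 0 then 0 else (f (p * x) - f (q * x)) / ((p - q) * x)

/-- The Lucas-Pantograph exponential `exp_{s,t}(z,u)`. -/
def lucasExp (s t u z : ℂ) : ℂ :=
  ∑' n : ℕ, u ^ (n.choose 2) * z ^ n / lucasFact s t n

/-- The Lucas-Pantograph sine `sin_{s,t}(z,u)`. -/
def lucasSin (s t u z : ℂ) : ℂ :=
  ∑' n : ℕ, (-1 : ℂ) ^ n * u ^ ((2 * n + 1).choose 2) * z ^ (2 * n + 1) / lucasFact s t (2 * n + 1)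

/-- The Lucas-Pantograph cosine `cos_{s,t}(z,u)`. -/
def lucasCos (s t u z : ℂ) : ℂ :=
  ∑' n : ℕ, (-1 : ℂ) ^ n * u ^ ((2 * n).choose 2) * z ^ (2 * n) / lucasFact s t (2 * n)

lemma lucasFact_ne_zero (s t : ℂ) (hL : ∀ n : ℕ, 1 ≤ n → lucasSeq s t n ≠ 0) :
    ∀ n, lucasFact s t n ≠ 0 := by
  intro n
  induction n with
  | zero => simp [lucasFact]
  | succ k ih =>
    show lucasFact s t k * lucasSeq s t (k + 1) ≠ 0
    exact mul_ne_zero ih (hL (k + 1) (by omega))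

lemma lucas_binet (s t d : ℂ) (hd : d ^ 2 = s ^ 2 + 4 * t) :
    ∀ n, ((s + d) / 2) ^ n - ((s - d) / 2) ^ n = d * lucasSeq s t n := by
  set p := (s + d) / 2 with hp
  set q := (s - d) / 2 with hq
  have hp2 : p ^ 2 = s * p + t := by rw [hp]; linear_combination hd / 4
  have hq2 : q ^ 2 = s * q + t := by rw [hq]; linear_combination hd / 4
  have key : ∀ n, (p ^ n - q ^ n = d * lucasSeq s t n) ∧
      (p ^ (n + 1) - q ^ (n + 1) = d * lucasSeq s t (n + 1)) := by
    intro n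
    induction n with
    | zero =>
      constructor
      · simp [lucasSeq]
      · show p ^ 1 - q ^ 1 = d * lucasSeq s t 1
        simp only [lucasSeq, pow_one, mul_one]
        rw [hp, hq]; ring
    | succ k ih =>
      refine ⟨ih.2, ?_⟩
      have h1 := ih.1
      have h2 := ih.2
      have e : lucasSeq s t (k + 2) = s * lucasSeq s t (k + 1) + t * lucasSeq s t k := rfl
      have hpe : p ^ (k + 2) = s * p ^ (k + 1) + t * p ^ k := by
        have : p ^ (k + 2) = p ^ k * p ^ 2 := by ring
        rw [this, hp2]; ring
      have hqe : q ^ (k + 2) = s * q ^ (k + 1) + t * q ^ k := by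
        have : q ^ (k + 2) = q ^ k * q ^ 2 := by ring
        rw [this, hq2]; ring
      rw [e, hpe, hqe]
      linear_combination s * h2 + t * h1
  exact fun n => (key n).1

/-- Lucas-derivatives of the Lucas-Pantograph sine and cosine, where `φ = (s+d)/2`,
`φ' = (s-d)/2` with `d` a square root of `s²+4t ≠ 0`. -/
theorem lucasDeriv_sin_cos (s t : ℂ) (hs : s ≠ 0) (ht : t ≠ 0)
    (hst : s ^ 2 + 4 * t ≠ 0) (hL : ∀ n : ℕ, 1 ≤ n → lucasSeq s t n ≠ 0)
    (d : ℂ) (hd : d ^ 2 = s ^ 2 + 4 * t)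
    (u : ℂ) (hu : u ≠ 0)
    (hconvs : ∀ w : ℂ, Summable fun n : ℕ =>
      ‖(-1 : ℂ) ^ n * u ^ ((2 * n + 1).choose 2) * w ^ (2 * n + 1) / lucasFact s t (2 * n + 1)‖)
    (hconvc : ∀ w : ℂ, Summable fun n : ℕ =>
      ‖(-1 : ℂ) ^ n * u ^ ((2 * n).choose 2) * w ^ (2 * n) / lucasFact s t (2 * n)‖)
    (x : ℂ) (hx : x ≠ 0) :
    lucasDeriv0 ((s + d) / 2) ((s - d) / 2) (lucasSin s t u) x = lucasCos s t u (u * x) ∧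
    lucasDeriv0 ((s + d) / 2) ((s - d) / 2) (lucasCos s t u) x = -lucasSin s t u (u * x) ∧
    (lucasDeriv0 ((s + d) / 2) ((s - d) / 2))^[2] (lucasSin s t u) x =
      -(u * lucasSin s t u (u ^ 2 * x)) ∧
    (lucasDeriv0 ((s + d) / 2) ((s - d) / 2))^[2] (lucasCos s t u) x =
      -(u * lucasCos s t u (u ^ 2 * x)) := by
  set p := (s + d) / 2 with hp
  set q := (s - d) / 2 with hq
  have hd0 : d ≠ 0 := by
    intro h; apply hst; rw [← hd, h]; ring
  have hpqsub : p - q = d := by rw [hp, hq]; ring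
  have hpqmul : p * q = -t := by rw [hp, hq]; linear_combination -hd / 4
  have hpqne : p * q ≠ 0 := by rw [hpqmul]; exact neg_ne_zero.mpr ht
  have hp0 : p ≠ 0 := left_ne_zero_of_mul hpqne
  have hq0 : q ≠ 0 := right_ne_zero_of_mul hpqne
  have hF0 := lucasFact_ne_zero s t hL
  have hB := lucas_binet s t d hd
  -- the sine derivative identity
  have hsin : ∀ y : ℂ, y ≠ 0 →
      (lucasSin s t u (p * y) - lucasSin s t u (q * y)) / (d * y) = lucasCos s t u (u * y) := by
    intro y hy
    have hSp : Summable (fun n : ℕ =>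
        (-1 : ℂ) ^ n * u ^ ((2 * n + 1).choose 2) * (p * y) ^ (2 * n + 1)
          / lucasFact s t (2 * n + 1)) := (hconvs (p * y)).of_norm
    have hSq : Summable (fun n : ℕ =>
        (-1 : ℂ) ^ n * u ^ ((2 * n + 1).choose 2) * (q * y) ^ (2 * n + 1)
          / lucasFact s t (2 * n + 1)) := (hconvs (q * y)).of_norm
    rw [lucasSin, lucasSin, ← Summable.tsum_sub hSp hSq, lucasCos, ← tsum_div_const]
    apply tsum_congr
    intro n
    have hb := hB (2 * n + 1)
    have hF : lucasFact s t (2 * n + 1) = lucasFact s t (2 * n) * lucasSeq s t (2 * n + 1) := rfl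
    have hL1 : lucasSeq s t (2 * n + 1) ≠ 0 := hL _ (by omega)
    have hF2 : lucasFact s t (2 * n) ≠ 0 := hF0 (2 * n)
    have hch : (2 * n + 1).choose 2 = (2 * n).choose 2 + 2 * n := by
      rw [Nat.choose_succ_succ, Nat.choose_one_right]; exact Nat.add_comm _ _
    have key : (-1 : ℂ) ^ n * u ^ ((2 * n + 1).choose 2) * (p * y) ^ (2 * n + 1)
          / lucasFact s t (2 * n + 1)
        - (-1 : ℂ) ^ n * u ^ ((2 * n + 1).choose 2) * (q * y) ^ (2 * n + 1)
          / lucasFact s t (2 * n + 1)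
        = (-1 : ℂ) ^ n * u ^ ((2 * n + 1).choose 2) * (d * lucasSeq s t (2 * n + 1))
          * y ^ (2 * n + 1) / lucasFact s t (2 * n + 1) := by
      rw [mul_pow, mul_pow, ← hb]; ring
    rw [key, hF, hch, pow_add, mul_pow]
    field_simp
    ring
  -- the cosine derivative identity
  have hcos : ∀ y : ℂ, y ≠ 0 →
      (lucasCos s t u (p * y) - lucasCos s t u (q * y)) / (d * y) = -lucasSin s t u (u * y) := by
    intro y hy
    have hSp : Summable (fun n : ℕ =>
        (-1 : ℂ) ^ n * u ^ ((2 * n).choose 2) * (p * y) ^ (2 * n)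
          / lucasFact s t (2 * n)) := (hconvc (p * y)).of_norm
    have hSq : Summable (fun n : ℕ =>
        (-1 : ℂ) ^ n * u ^ ((2 * n).choose 2) * (q * y) ^ (2 * n)
          / lucasFact s t (2 * n)) := (hconvc (q * y)).of_norm
    have hS : Summable (fun n : ℕ =>
        ((-1 : ℂ) ^ n * u ^ ((2 * n).choose 2) * (p * y) ^ (2 * n) / lucasFact s t (2 * n)
          - (-1 : ℂ) ^ n * u ^ ((2 * n).choose 2) * (q * y) ^ (2 * n) / lucasFact s t (2 * n))
          / (d * y)) := (hSp.sub hSq).div_const _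
    rw [lucasCos, lucasCos, ← Summable.tsum_sub hSp hSq, ← tsum_div_const, Summable.tsum_eq_zero_add hS]
    have h0 : ((-1 : ℂ) ^ 0 * u ^ ((2 * 0).choose 2) * (p * y) ^ (2 * 0) / lucasFact s t (2 * 0)
        - (-1 : ℂ) ^ 0 * u ^ ((2 * 0).choose 2) * (q * y) ^ (2 * 0) / lucasFact s t (2 * 0))
        / (d * y) = 0 := by
      norm_num
    rw [h0, zero_add, lucasSin, ← tsum_neg]
    apply tsum_congr
    intro n
    have h2 : 2 * (n + 1) = 2 * n + 2 := by ring
    have hb := hB (2 * n + 2)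
    have hF : lucasFact s t (2 * n + 2) = lucasFact s t (2 * n + 1) * lucasSeq s t (2 * n + 2) :=
      rfl
    have hL2 : lucasSeq s t (2 * n + 2) ≠ 0 := hL _ (by omega)
    have hF1 : lucasFact s t (2 * n + 1) ≠ 0 := hF0 (2 * n + 1)
    have hch : (2 * n + 2).choose 2 = (2 * n + 1).choose 2 + (2 * n + 1) := by
      rw [Nat.choose_succ_succ, Nat.choose_one_right]; exact Nat.add_comm _ _
    rw [h2]
    have key : (-1 : ℂ) ^ (n + 1) * u ^ ((2 * n + 2).choose 2) * (p * y) ^ (2 * n + 2)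
          / lucasFact s t (2 * n + 2)
        - (-1 : ℂ) ^ (n + 1) * u ^ ((2 * n + 2).choose 2) * (q * y) ^ (2 * n + 2)
          / lucasFact s t (2 * n + 2)
        = (-1 : ℂ) ^ (n + 1) * u ^ ((2 * n + 2).choose 2) * (d * lucasSeq s t (2 * n + 2))
          * y ^ (2 * n + 2) / lucasFact s t (2 * n + 2) := by
      rw [mul_pow, mul_pow, ← hb]; ring
    rw [key, hF, hch, pow_add, mul_pow]
    field_simp
    ring
  -- pointwise versions via `lucasDeriv0`
  have hDs : ∀ y : ℂ, y ≠ 0 →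
      lucasDeriv0 p q (lucasSin s t u) y = lucasCos s t u (u * y) := by
    intro y hy
    show (if y = 0 then 0
      else (lucasSin s t u (p * y) - lucasSin s t u (q * y)) / ((p - q) * y))
      = lucasCos s t u (u * y)
    rw [if_neg hy, hpqsub]
    exact hsin y hy
  have hDc : ∀ y : ℂ, y ≠ 0 →
      lucasDeriv0 p q (lucasCos s t u) y = -lucasSin s t u (u * y) := by
    intro y hy
    show (if y = 0 then 0
      else (lucasCos s t u (p * y) - lucasCos s t u (q * y)) / ((p - q) * y))
      = -lucasSin s t u (u * y)
    rw [if_neg hy, hpqsub]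
    exact hcos y hy
  have hux : u * x ≠ 0 := mul_ne_zero hu hx
  have hdx : d * x ≠ 0 := mul_ne_zero hd0 hx
  refine ⟨hDs x hx, hDc x hx, ?_, ?_⟩
  · have e2 : (lucasDeriv0 p q)^[2] (lucasSin s t u) x
        = lucasDeriv0 p q (lucasDeriv0 p q (lucasSin s t u)) x := by
      simp [Function.iterate_succ, Function.iterate_zero, Function.comp_apply]
    rw [e2]
    show (if x = 0 then 0
      else (lucasDeriv0 p q (lucasSin s t u) (p * x) - lucasDeriv0 p q (lucasSin s t u) (q * x))
        / ((p - q) * x)) = -(u * lucasSin s t u (u ^ 2 * x))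
    rw [if_neg hx, hpqsub, hDs (p * x) (mul_ne_zero hp0 hx), hDs (q * x) (mul_ne_zero hq0 hx)]
    have hc := hcos (u * x) hux
    have hA : lucasCos s t u (p * (u * x)) - lucasCos s t u (q * (u * x))
        = -lucasSin s t u (u * (u * x)) * (d * (u * x)) := by
      rw [← hc]
      field_simp
    rw [show u * (p * x) = p * (u * x) from by ring,
        show u * (q * x) = q * (u * x) from by ring,
        show u ^ 2 * x = u * (u * x) from by ring, hA]
    field_simp
  · have e2 : (lucasDeriv0 p q)^[2] (lucasCos s t u) x
        = lucasDeriv0 p q (lucasDeriv0 p q (lucasCos s t u)) x := by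
      simp [Function.iterate_succ, Function.iterate_zero, Function.comp_apply]
    rw [e2]
    show (if x = 0 then 0
      else (lucasDeriv0 p q (lucasCos s t u) (p * x) - lucasDeriv0 p q (lucasCos s t u) (q * x))
        / ((p - q) * x)) = -(u * lucasCos s t u (u ^ 2 * x))
    rw [if_neg hx, hpqsub, hDc (p * x) (mul_ne_zero hp0 hx), hDc (q * x) (mul_ne_zero hq0 hx)]
    have hc := hsin (u * x) hux
    have hA : lucasSin s t u (p * (u * x)) - lucasSin s t u (q * (u * x))
        = lucasCos s t u (u * (u * x)) * (d * (u * x)) := by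
      rw [← hc]
      field_simp
    rw [show u * (p * x) = p * (u * x) from by ring,
        show u * (q * x) = q * (u * x) from by ring,
        show u ^ 2 * x = u * (u * x) from by ring]
    rw [show -lucasSin s t u (p * (u * x)) - -lucasSin s t u (q * (u * x))
        = -(lucasSin s t u (p * (u * x)) - lucasSin s t u (q * (u * x))) from by ring, hA]
    field_simp
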